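/- Let k ≥ 2 and let P_π be a weighted poset on {1,…,2^k}. If the extended binary Hamming code H̃_k is a 2-perfect P_π-code, then Ω₁²(1) = 1 + (1/2)·Ω₁¹(1)·(Ω₁¹(1) − 3), i.e., 2·Ω₁²(1) = 2 + Ω₁¹(1)·(Ω₁¹(1) − 3), where Ω_j^ω(i) denotes the number of order ideals of P_π of cardinality i, total weight ω, and exactly j maximal elements (so Ω₁¹(1) is the number of minimal elements of weight 1 and Ω₁²(1) is the number of minimal elements of weight 2). -/

import Mathlib

open Classical

noncomputable def wtP {α : Type*} [Fintype α] (le : α → α → Prop) (π : α → ℕ)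
    (x : α → ZMod 2) : ℕ :=
  ∑ j ∈ Finset.univ.filter (fun j => ∃ i, x i ≠ 0 ∧ le j i), π j

noncomputable def dP {α : Type*} [Fintype α] (le : α → α → Prop) (π : α → ℕ)
    (x y : α → ZMod 2) : ℕ :=
  wtP le π (x - y)

def IsCovering {β : Type*} (d : β → β → ℕ) (C : Set β) (r : ℕ) : Prop :=
  ∀ x, ∃ c ∈ C, d c x ≤ r

def IsPacking {β : Type*} (d : β → β → ℕ) (C : Set β) (r : ℕ) : Prop :=
  ∀ c₁ ∈ C, ∀ c₂ ∈ C, c₁ ≠ c₂ → ∀ x, ¬(d c₁ x ≤ r ∧ d c₂ x ≤ r)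

def extHamming (k : ℕ) : Set (Fin (2 ^ k) → ZMod 2) :=
  {x | (∑ i, x i) = 0 ∧
    ∀ j < k, (∑ i ∈ Finset.univ.filter (fun i : Fin (2 ^ k) => Nat.testBit i.val j), x i) = 0}

noncomputable def Omega {α : Type*} [Fintype α] (le : α → α → Prop) (π : α → ℕ)
    (j ω i : ℕ) : ℕ :=
  (Finset.univ.filter (fun I : Finset α =>
      (∀ a ∈ I, ∀ b, le b a → b ∈ I) ∧
      I.card = i ∧ (∑ a ∈ I, π a) = ω ∧
      (I.filter (fun a => ∀ b ∈ I, le a b → a = b)).card = j)).card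

section Aux
open Finset
variable {N : ℕ} (le : Fin N → Fin N → Prop) (π : Fin N → ℕ)
noncomputable def idl (x : Fin N → ZMod 2) : Finset (Fin N) :=
  Finset.univ.filter (fun j => ∃ i, x i ≠ 0 ∧ le j i)
lemma wtP_def (x : Fin N → ZMod 2) : wtP le π x = ∑ j ∈ idl le x, π j := by unfold wtP idl; convert rfl
lemma zmod_ne {a : ZMod 2} (h : a ≠ 0) : a = 1 := by revert h; revert a; decide
lemma sum_eq_card (x : Fin N → ZMod 2) :
    (∑ i, x i) = ((Finset.univ.filter (fun i => x i ≠ 0)).card : ZMod 2) := by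
  rw [← Finset.sum_filter_ne_zero]
  rw [Finset.sum_congr rfl (fun i hi => zmod_ne (Finset.mem_filter.mp hi).2)]
  simp

lemma idl_card (hπ : ∀ i, 0 < π i) {x : Fin N → ZMod 2} (h2 : wtP le π x ≤ 2) :
    (idl le x).card ≤ 2 := by
  have h := Finset.card_nsmul_le_sum (idl le x) π 1 (fun i _ => hπ i)
  simp only [smul_eq_mul, mul_one] at h
  exact h.trans (by rw [← wtP_def]; exact h2)

lemma supp_subset (hrefl : ∀ i, le i i) (x : Fin N → ZMod 2) :
    Finset.univ.filter (fun i => x i ≠ 0) ⊆ idl le x := by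
  intro i hi
  simp only [idl, mem_filter, mem_univ, true_and] at hi ⊢
  exact ⟨i, hi, hrefl i⟩

lemma supp_card (hrefl : ∀ i, le i i) (hπ : ∀ i, 0 < π i)
    {x : Fin N → ZMod 2} (h2 : wtP le π x ≤ 2) :
    (Finset.univ.filter (fun i => x i ≠ 0)).card ≤ 2 :=
  (Finset.card_le_card (supp_subset le hrefl x)).trans (idl_card le π hπ h2)

lemma odd_shape (hrefl : ∀ i, le i i) (hπ : ∀ i, 0 < π i)
    {x : Fin N → ZMod 2} (h2 : wtP le π x ≤ 2) (hp : (∑ i, x i) = 1) :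
    ∃ m, x = Pi.single m 1 := by
  set S := Finset.univ.filter (fun i => x i ≠ 0) with hS
  have hcard : S.card ≤ 2 := supp_card le π hrefl hπ h2
  have hps : (S.card : ZMod 2) = 1 := by rw [← sum_eq_card]; exact hp
  have h1 : S.card = 1 := by
    interval_cases h : S.card <;> revert hps <;> decide
  obtain ⟨m, hm⟩ := Finset.card_eq_one.mp h1
  refine ⟨m, funext fun i => ?_⟩
  by_cases hi : i = m
  · subst hi
    have : i ∈ S := hm ▸ Finset.mem_singleton_self i
    rw [Finset.mem_filter] at this
    rw [zmod_ne this.2, Pi.single_eq_same]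
  · have : i ∉ S := by rw [hm]; simp [hi]
    rw [Finset.mem_filter] at this
    push_neg at this
    rw [this (Finset.mem_univ i), Pi.single_eq_of_ne hi]

lemma even_shape (hrefl : ∀ i, le i i) (hπ : ∀ i, 0 < π i)
    {x : Fin N → ZMod 2} (h2 : wtP le π x ≤ 2) (hp : (∑ i, x i) = 0) (hx : x ≠ 0) :
    ∃ i j, i < j ∧ x = Pi.single i 1 + Pi.single j 1 := by
  set S := Finset.univ.filter (fun i => x i ≠ 0) with hS
  have hcard : S.card ≤ 2 := supp_card le π hrefl hπ h2
  have hps : (S.card : ZMod 2) = 0 := by rw [← sum_eq_card]; exact hp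
  have hne : S.Nonempty := by
    rcases Function.ne_iff.mp hx with ⟨i, hi⟩
    exact ⟨i, by simp [hS]; exact hi⟩
  have h1 : S.card = 2 := by
    have := Finset.card_pos.mpr hne
    interval_cases h : S.card <;> revert hps <;> decide
  obtain ⟨a, b, hab, hm⟩ := Finset.card_eq_two.mp h1
  rcases lt_or_gt_of_ne hab with hlt | hlt
  · refine ⟨a, b, hlt, funext fun l => ?_⟩
    by_cases hla : l = a
    · subst hla
      have hl : l ∈ S := hm ▸ by simp
      rw [Finset.mem_filter] at hl
      simp [zmod_ne hl.2, Pi.single_eq_same, Pi.single_eq_of_ne hab]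
    · by_cases hlb : l = b
      · subst hlb
        have hl : l ∈ S := hm ▸ by simp
        rw [Finset.mem_filter] at hl
        simp [zmod_ne hl.2, Pi.single_eq_same, Pi.single_eq_of_ne (Ne.symm hab), Pi.single_eq_of_ne hla]
      · have hl : l ∉ S := by rw [hm]; simp [hla, hlb]
        rw [Finset.mem_filter] at hl
        push_neg at hl
        simp [hl (Finset.mem_univ l), Pi.single_eq_of_ne hla, Pi.single_eq_of_ne hlb]
  · refine ⟨b, a, hlt, funext fun l => ?_⟩
    by_cases hla : l = a
    · subst hla
      have hl : l ∈ S := hm ▸ by simp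
      rw [Finset.mem_filter] at hl
      simp [zmod_ne hl.2, Pi.single_eq_same, Pi.single_eq_of_ne hab]
    · by_cases hlb : l = b
      · subst hlb
        have hl : l ∈ S := hm ▸ by simp
        rw [Finset.mem_filter] at hl
        simp [zmod_ne hl.2, Pi.single_eq_same, Pi.single_eq_of_ne (Ne.symm hab), Pi.single_eq_of_ne hla]
      · have hl : l ∉ S := by rw [hm]; simp [hla, hlb]
        rw [Finset.mem_filter] at hl
        push_neg at hl
        simp [hl (Finset.mem_univ l), Pi.single_eq_of_ne hla, Pi.single_eq_of_ne hlb]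

noncomputable def dn (m : Fin N) : Finset (Fin N) := Finset.univ.filter (fun j => le j m)

lemma idl_single (m : Fin N) : idl le (Pi.single m 1) = dn le m := by
  ext j
  simp only [idl, dn, mem_filter, mem_univ, true_and]
  constructor
  · rintro ⟨i, hi, hle⟩
    have : i = m := by
      by_contra h; rw [Pi.single_eq_of_ne h] at hi; exact hi rfl
    rwa [this] at hle
  · intro h; exact ⟨m, by simp, h⟩

lemma wt_single (m : Fin N) : wtP le π (Pi.single m 1) = ∑ j ∈ dn le m, π j := by
  rw [wtP_def, idl_single]

lemma pair_apply {i j : Fin N} (hij : i ≠ j) (l : Fin N) :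
    (Pi.single i 1 + Pi.single j 1 : Fin N → ZMod 2) l ≠ 0 ↔ (l = i ∨ l = j) := by
  by_cases hli : l = i
  · subst hli
    simp [Pi.single_eq_same, Pi.single_eq_of_ne hij]
  · by_cases hlj : l = j
    · subst hlj
      simp [Pi.single_eq_same, Pi.single_eq_of_ne (Ne.symm hij), hli]
    · simp [Pi.single_eq_of_ne hli, Pi.single_eq_of_ne hlj, hli, hlj]

lemma idl_pair {i j : Fin N} (hij : i ≠ j) :
    idl le (Pi.single i 1 + Pi.single j 1)
      = Finset.univ.filter (fun l => le l i ∨ le l j) := by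
  ext l
  simp only [idl, mem_filter, mem_univ, true_and]
  constructor
  · rintro ⟨t, ht, hle⟩
    rcases (pair_apply hij t).mp ht with h | h
    · exact Or.inl (h ▸ hle)
    · exact Or.inr (h ▸ hle)
  · rintro (h | h)
    · exact ⟨i, (pair_apply hij i).mpr (Or.inl rfl), h⟩
    · exact ⟨j, (pair_apply hij j).mpr (Or.inr rfl), h⟩

lemma card_le_of_sum (hπ : ∀ i, 0 < π i) {s : Finset (Fin N)}
    (h : ∑ j ∈ s, π j ≤ 2) : s.card ≤ 2 := by
  have hh := Finset.card_nsmul_le_sum s π 1 (fun i _ => hπ i)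
  simp only [smul_eq_mul, mul_one] at hh
  exact hh.trans h

noncomputable def MinA (ω : ℕ) : Finset (Fin N) :=
  Finset.univ.filter (fun m => (∀ l, le l m → l = m) ∧ π m = ω)

noncomputable def CsetF : Finset (Fin N) :=
  Finset.univ.filter
    (fun j => ∃ i, i ≠ j ∧ le i j ∧ π i = 1 ∧ π j = 1 ∧ ∀ l, le l j → l = i ∨ l = j)

lemma modd_eq (hrefl : ∀ i, le i i) (hπ : ∀ i, 0 < π i) :
    Finset.univ.filter (fun m => wtP le π (Pi.single m 1) ≤ 2)
      = (MinA le π 1 ∪ MinA le π 2) ∪ CsetF le π := by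
  ext m
  simp only [MinA, CsetF, mem_union, mem_filter, mem_univ, true_and]
  constructor
  · intro h2
    rw [wt_single] at h2
    have hm : m ∈ dn le m := by simp [dn, hrefl m]
    have hcard : (dn le m).card ≤ 2 := card_le_of_sum π hπ h2
    have hpos : 1 ≤ (dn le m).card := Finset.card_pos.mpr ⟨m, hm⟩
    interval_cases h : (dn le m).card
    · obtain ⟨z, hz⟩ := Finset.card_eq_one.mp h
      have hzm : m = z := by
        have := hz ▸ hm; simpa using this
      subst hzm
      have hmin : ∀ l, le l m → l = m := by
        intro l hl
        have : l ∈ dn le m := by simp [dn, hl]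
        simpa [hz] using this
      have hsum : π m ≤ 2 := by
        rw [hz, Finset.sum_singleton] at h2; exact h2
      have := hπ m
      left
      rcases (by omega : π m = 1 ∨ π m = 2) with h1 | h1
      · exact Or.inl ⟨hmin, h1⟩
      · exact Or.inr ⟨hmin, h1⟩
    · obtain ⟨a, b, hab, habs⟩ := Finset.card_eq_two.mp h
      have hmab : m = a ∨ m = b := by
        have := habs ▸ hm; simpa using this
      -- let i be the other element
      obtain ⟨i, him, hset⟩ : ∃ i, i ≠ m ∧ dn le m = {i, m} := by
        rcases hmab with hma | hmb
        · subst hma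
          exact ⟨b, Ne.symm hab, by rw [habs, Finset.pair_comm]⟩
        · subst hmb
          exact ⟨a, hab, habs⟩
      have hlei : le i m := by
        have : i ∈ dn le m := by rw [hset]; simp
        simpa [dn] using this
      have hsum : π i + π m ≤ 2 := by
        rw [hset, Finset.sum_pair him] at h2; exact h2
      have h1 := hπ i; have h2' := hπ m
      have hdown : ∀ l, le l m → l = i ∨ l = m := by
        intro l hl
        have : l ∈ dn le m := by simp [dn, hl]
        rw [hset] at this; simpa using this
      right
      exact ⟨i, him, hlei, by omega, by omega, hdown⟩
  · rintro ((⟨hmin, h1⟩ | ⟨hmin, h1⟩) | ⟨i, him, hlei, hπi, hπm, hdown⟩)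
    · rw [wt_single]
      have : dn le m = {m} := by
        ext l; simp only [dn, mem_filter, mem_univ, true_and, Finset.mem_singleton]
        exact ⟨hmin l, fun h => h ▸ hrefl m⟩
      rw [this, Finset.sum_singleton, h1]
      omega
    · rw [wt_single]
      have : dn le m = {m} := by
        ext l; simp only [dn, mem_filter, mem_univ, true_and, Finset.mem_singleton]
        exact ⟨hmin l, fun h => h ▸ hrefl m⟩
      rw [this, Finset.sum_singleton, h1]
    · rw [wt_single]
      have : dn le m = {i, m} := by
        ext l; simp only [dn, mem_filter, mem_univ, true_and, Finset.mem_insert,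
          Finset.mem_singleton]
        refine ⟨hdown l, ?_⟩
        rintro (h | h)
        · exact h ▸ hlei
        · exact h ▸ hrefl m
      rw [this, Finset.sum_pair him, hπi, hπm]

noncomputable def OPF : Finset (Fin N × Fin N) :=
  Finset.univ.offDiag.filter
    (fun p => π p.1 = 1 ∧ π p.2 = 1 ∧ ∀ l, le l p.1 ∨ le l p.2 → l = p.1 ∨ l = p.2)

lemma pair_wt (hrefl : ∀ i, le i i) (hπ : ∀ i, 0 < π i) {i j : Fin N} (hij : i ≠ j) :
    wtP le π (Pi.single i 1 + Pi.single j 1) ≤ 2 ↔ (i, j) ∈ OPF le π := by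
  rw [wtP_def, idl_pair le hij]
  simp only [OPF, mem_filter, Finset.mem_offDiag, mem_univ, true_and]
  constructor
  · intro h2
    have hsub : ({i, j} : Finset (Fin N)) ⊆
        Finset.univ.filter (fun l => le l i ∨ le l j) := by
      intro l hl
      simp only [Finset.mem_insert, Finset.mem_singleton] at hl
      simp only [mem_filter, mem_univ, true_and]
      rcases hl with h | h
      · subst h; exact Or.inl (hrefl _)
      · subst h; exact Or.inr (hrefl _)
    have hcard : (Finset.univ.filter (fun l => le l i ∨ le l j)).card ≤ 2 :=
      card_le_of_sum π hπ h2
    have hcard2 : ({i, j} : Finset (Fin N)).card = 2 := Finset.card_pair hij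
    have heq := Finset.eq_of_subset_of_card_le hsub (by omega)
    have hdown : ∀ l, le l i ∨ le l j → l = i ∨ l = j := by
      intro l hl
      have : l ∈ Finset.univ.filter (fun l => le l i ∨ le l j) := by simp [hl]
      rw [← heq] at this; simpa using this
    rw [← heq, Finset.sum_pair hij] at h2
    have := hπ i; have := hπ j
    exact ⟨hij, by omega, by omega, hdown⟩
  · rintro ⟨-, hπi, hπj, hdown⟩
    have heq : Finset.univ.filter (fun l => le l i ∨ le l j) = {i, j} := by
      ext l
      simp only [mem_filter, mem_univ, true_and, Finset.mem_insert, Finset.mem_singleton]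
      refine ⟨hdown l, ?_⟩
      rintro (h | h)
      · subst h; exact Or.inl (hrefl _)
      · subst h; exact Or.inr (hrefl _)
    rw [heq, Finset.sum_pair hij, hπi, hπj]


noncomputable def OPlt : Finset (Fin N × Fin N) := (OPF le π).filter (fun p => p.1 < p.2)

lemma OPF_mem {p : Fin N × Fin N} :
    p ∈ OPF le π ↔ p.1 ≠ p.2 ∧ π p.1 = 1 ∧ π p.2 = 1 ∧
      ∀ l, le l p.1 ∨ le l p.2 → l = p.1 ∨ l = p.2 := by
  simp only [OPF, mem_filter, Finset.mem_offDiag, mem_univ, true_and]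

lemma OPF_swap {p : Fin N × Fin N} (hp : p ∈ OPF le π) : p.swap ∈ OPF le π := by
  rw [OPF_mem] at hp ⊢
  obtain ⟨hne, h1, h2, h3⟩ := hp
  exact ⟨hne.symm, h2, h1, fun l hl => (h3 l hl.symm).symm⟩

lemma OPF_card_eq : (OPF le π).card = 2 * (OPlt le π).card := by
  have hgt : ((OPF le π).filter (fun p => ¬ p.1 < p.2)).card = (OPlt le π).card := by
    apply Finset.card_bij (fun p _ => Prod.swap p)
    · intro p hp
      rw [mem_filter] at hp
      have hne : p.1 ≠ p.2 := (OPF_mem le π |>.mp hp.1).1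
      refine Finset.mem_filter.mpr ⟨OPF_swap le π hp.1, ?_⟩
      exact (not_lt.mp hp.2).lt_of_ne hne.symm
    · intro a _ b _ h
      exact Prod.swap_injective h
    · intro b hb
      rw [OPlt, mem_filter] at hb
      refine ⟨b.swap, Finset.mem_filter.mpr ⟨OPF_swap le π hb.1, ?_⟩, Prod.swap_swap b⟩
      simpa using lt_asymm hb.2
  have h := Finset.card_filter_add_card_filter_not
    (s := OPF le π) (p := fun p => p.1 < p.2)
  rw [hgt] at h
  rw [OPlt] at *
  omega

lemma B_card (hrefl : ∀ i, le i i) (hantisymm : ∀ i j, le i j → le j i → i = j)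
    (htrans : ∀ i j l, le i j → le j l → le i l) :
    ((OPF le π).filter (fun p => ¬ ∀ l, le l p.1 → l = p.1)).card = (CsetF le π).card := by
  apply Finset.card_bij (fun p _ => p.1)
  · intro p hp
    rw [mem_filter] at hp
    obtain ⟨hOP, hnm⟩ := hp
    rw [OPF_mem] at hOP
    obtain ⟨hne, h1, h2, h3⟩ := hOP
    push_neg at hnm
    obtain ⟨l₀, hle₀, hne₀⟩ := hnm
    have hl₀ : l₀ = p.2 := by
      rcases h3 l₀ (Or.inl hle₀) with h | h
      · exact absurd h hne₀
      · exact h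
    subst hl₀
    simp only [CsetF, mem_filter, mem_univ, true_and]
    exact ⟨p.2, hne.symm, hle₀, h2, h1, fun l hl => (h3 l (Or.inl hl)).symm⟩
  · intro a ha b hb h
    rw [mem_filter] at ha hb
    obtain ⟨hOPa, hnma⟩ := ha
    obtain ⟨hOPb, hnmb⟩ := hb
    rw [OPF_mem] at hOPa hOPb
    push_neg at hnma
    obtain ⟨l₀, hle₀, hne₀⟩ := hnma
    have ha2 : l₀ = a.2 := by
      rcases hOPa.2.2.2 l₀ (Or.inl hle₀) with h' | h'
      · exact absurd h' hne₀
      · exact h'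
    have hb2 : l₀ = b.2 := by
      rcases hOPb.2.2.2 l₀ (Or.inl (h ▸ hle₀)) with h' | h'
      · exact absurd h' (h ▸ hne₀)
      · exact h'
    exact Prod.ext h (ha2 ▸ hb2)
  · intro j hj
    simp only [CsetF, mem_filter, mem_univ, true_and] at hj
    obtain ⟨i, hij, hle, hπi, hπj, hdown⟩ := hj
    refine ⟨(j, i), Finset.mem_filter.mpr ⟨OPF_mem le π |>.mpr ⟨hij.symm, hπj, hπi, ?_⟩, ?_⟩, rfl⟩
    · intro l hl
      rcases hl with hl | hl
      · exact (hdown l hl).symm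
      · exact (hdown l (htrans l i j hl hle)).symm
    · push_neg
      exact ⟨i, hle, hij⟩

lemma A2_card (hrefl : ∀ i, le i i) (hantisymm : ∀ i j, le i j → le j i → i = j)
    (htrans : ∀ i j l, le i j → le j l → le i l) :
    ((OPF le π).filter (fun p => (∀ l, le l p.1 → l = p.1) ∧
        ¬ ∀ l, le l p.2 → l = p.2)).card = (CsetF le π).card := by
  apply Finset.card_bij (fun p _ => p.2)
  · intro p hp
    rw [mem_filter] at hp
    obtain ⟨hOP, hmin1, hnm⟩ := hp
    rw [OPF_mem] at hOP
    obtain ⟨hne, h1, h2, h3⟩ := hOP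
    push_neg at hnm
    obtain ⟨l₀, hle₀, hne₀⟩ := hnm
    have hl₀ : l₀ = p.1 := by
      rcases h3 l₀ (Or.inr hle₀) with h | h
      · exact h
      · exact absurd h hne₀
    subst hl₀
    simp only [CsetF, mem_filter, mem_univ, true_and]
    exact ⟨p.1, hne, hle₀, h1, h2, fun l hl => h3 l (Or.inr hl)⟩
  · intro a ha b hb h
    rw [mem_filter] at ha hb
    obtain ⟨hOPa, hmina, hnma⟩ := ha
    obtain ⟨hOPb, hminb, hnmb⟩ := hb
    rw [OPF_mem] at hOPa hOPb
    push_neg at hnma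
    obtain ⟨l₀, hle₀, hne₀⟩ := hnma
    have ha1 : l₀ = a.1 := by
      rcases hOPa.2.2.2 l₀ (Or.inr hle₀) with h' | h'
      · exact h'
      · exact absurd h' hne₀
    have hb1 : l₀ = b.1 := by
      rcases hOPb.2.2.2 l₀ (Or.inr (h ▸ hle₀)) with h' | h'
      · exact h'
      · exact absurd h' (h ▸ hne₀)
    exact Prod.ext (ha1 ▸ hb1) h
  · intro j hj
    simp only [CsetF, mem_filter, mem_univ, true_and] at hj
    obtain ⟨i, hij, hle, hπi, hπj, hdown⟩ := hj
    have hmini : ∀ l, le l i → l = i := by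
      intro l hl
      rcases hdown l (htrans l i j hl hle) with h | h
      · exact h
      · exact absurd (hantisymm i j hle (h ▸ hl)) hij
    refine ⟨(i, j), Finset.mem_filter.mpr ⟨OPF_mem le π |>.mpr ⟨hij, hπi, hπj, ?_⟩,
      hmini, ?_⟩, rfl⟩
    · intro l hl
      rcases hl with hl | hl
      · exact Or.inl (hmini l hl)
      · exact hdown l hl
    · push_neg
      exact ⟨i, hle, hij⟩

lemma A1_eq :
    (OPF le π).filter (fun p => (∀ l, le l p.1 → l = p.1) ∧
        (∀ l, le l p.2 → l = p.2)) = (MinA le π 1).offDiag := by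
  ext p
  simp only [mem_filter, Finset.mem_offDiag, MinA, mem_univ, true_and, OPF_mem]
  constructor
  · rintro ⟨⟨hne, h1, h2, h3⟩, hm1, hm2⟩
    exact ⟨⟨hm1, h1⟩, ⟨hm2, h2⟩, hne⟩
  · rintro ⟨⟨hm1, h1⟩, ⟨hm2, h2⟩, hne⟩
    refine ⟨⟨hne, h1, h2, ?_⟩, hm1, hm2⟩
    intro l hl
    rcases hl with hl | hl
    · exact Or.inl (hm1 l hl)
    · exact Or.inr (hm2 l hl)

lemma OPF_card_decomp (hrefl : ∀ i, le i i)
    (hantisymm : ∀ i j, le i j → le j i → i = j)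
    (htrans : ∀ i j l, le i j → le j l → le i l) :
    (OPF le π).card = (MinA le π 1).offDiag.card + 2 * (CsetF le π).card := by
  have h1 := Finset.card_filter_add_card_filter_not
    (s := OPF le π) (p := fun p => ∀ l, le l p.1 → l = p.1)
  have h2 := Finset.card_filter_add_card_filter_not
    (s := (OPF le π).filter (fun p => ∀ l, le l p.1 → l = p.1))
    (p := fun p => ∀ l, le l p.2 → l = p.2)
  rw [Finset.filter_filter, Finset.filter_filter] at h2
  have e1 : ((OPF le π).filter (fun p => (∀ l, le l p.1 → l = p.1) ∧
      (∀ l, le l p.2 → l = p.2))).card = (MinA le π 1).offDiag.card := by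
    rw [A1_eq]
  have e2 := A2_card le π hrefl hantisymm htrans
  have e3 := B_card le π hrefl hantisymm htrans
  omega


lemma wtP_zero : wtP le π (0 : Fin N → ZMod 2) = 0 := by
  rw [wtP_def]
  have : idl le (0 : Fin N → ZMod 2) = ∅ := by
    ext j; simp [idl]
  rw [this, Finset.sum_empty]

lemma sum_single (m : Fin N) : (∑ i, (Pi.single m 1 : Fin N → ZMod 2) i) = 1 := by
  rw [Fintype.sum_eq_single m (fun b hb => Pi.single_eq_of_ne hb 1)]
  exact Pi.single_eq_same m 1

lemma single_inj : Function.Injective (fun m : Fin N => (Pi.single m 1 : Fin N → ZMod 2)) := by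
  intro a b h
  by_contra hne
  have h2 : (Pi.single a 1 : Fin N → ZMod 2) = Pi.single b 1 := h
  have := congrFun h2 a
  rw [Pi.single_eq_same, Pi.single_eq_of_ne hne] at this
  exact one_ne_zero this

lemma bodd_card (hrefl : ∀ i, le i i) (hπ : ∀ i, 0 < π i) :
    (Finset.univ.filter (fun x : Fin N → ZMod 2 => wtP le π x ≤ 2 ∧ (∑ i, x i) = 1)).card
      = ((MinA le π 1).card + (MinA le π 2).card) + (CsetF le π).card := by
  have himg : Finset.univ.filter (fun x : Fin N → ZMod 2 => wtP le π x ≤ 2 ∧ (∑ i, x i) = 1)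
      = (Finset.univ.filter (fun m => wtP le π (Pi.single m 1) ≤ 2)).image
          (fun m => (Pi.single m 1 : Fin N → ZMod 2)) := by
    ext x
    simp only [mem_filter, mem_univ, true_and, Finset.mem_image]
    constructor
    · rintro ⟨h2, hp⟩
      obtain ⟨m, hm⟩ := odd_shape le π hrefl hπ h2 hp
      exact ⟨m, by rw [← hm]; exact h2, hm.symm⟩
    · rintro ⟨m, hm, rfl⟩
      exact ⟨hm, sum_single m⟩
  rw [himg, Finset.card_image_of_injective _ single_inj, modd_eq le π hrefl hπ]
  have d12 : Disjoint (MinA le π 1) (MinA le π 2) := by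
    rw [Finset.disjoint_left]
    intro m h1 h2
    simp only [MinA, mem_filter] at h1 h2
    omega
  have dC : Disjoint (MinA le π 1 ∪ MinA le π 2) (CsetF le π) := by
    rw [Finset.disjoint_left]
    intro m h1 h2
    simp only [MinA, CsetF, mem_filter, mem_union, mem_univ, true_and] at h1 h2
    obtain ⟨i, hij, hle, -⟩ := h2
    rcases h1 with ⟨hmin, -⟩ | ⟨hmin, -⟩ <;> exact hij (hmin i hle)
  rw [Finset.card_union_of_disjoint dC, Finset.card_union_of_disjoint d12]

lemma sum_pair_fun (i j : Fin N) :
    (∑ l, (Pi.single i 1 + Pi.single j 1 : Fin N → ZMod 2) l) = 0 := by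
  simp only [Pi.add_apply]
  rw [Finset.sum_add_distrib, sum_single, sum_single]
  decide

lemma pair_ne_zero {i j : Fin N} (hij : i ≠ j) :
    (Pi.single i 1 + Pi.single j 1 : Fin N → ZMod 2) ≠ 0 := by
  intro h
  have := congrFun h i
  rw [(by rfl : (0 : Fin N → ZMod 2) i = 0)] at this
  exact ((pair_apply hij i).mpr (Or.inl rfl)) this

lemma beven_card (hrefl : ∀ i, le i i) (hπ : ∀ i, 0 < π i) :
    (Finset.univ.filter (fun x : Fin N → ZMod 2 => wtP le π x ≤ 2 ∧ (∑ i, x i) = 0)).card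
      = 1 + (OPlt le π).card := by
  have himg : Finset.univ.filter (fun x : Fin N → ZMod 2 => wtP le π x ≤ 2 ∧ (∑ i, x i) = 0)
      = insert (0 : Fin N → ZMod 2)
          ((OPlt le π).image (fun p => (Pi.single p.1 1 + Pi.single p.2 1 : Fin N → ZMod 2))) := by
    ext x
    simp only [mem_filter, mem_univ, true_and, Finset.mem_insert, Finset.mem_image]
    constructor
    · rintro ⟨h2, hp⟩
      by_cases hx : x = 0
      · exact Or.inl hx
      · obtain ⟨i, j, hlt, hm⟩ := even_shape le π hrefl hπ h2 hp hx
        refine Or.inr ⟨(i, j), ?_, hm.symm⟩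
        rw [OPlt, mem_filter]
        exact ⟨(pair_wt le π hrefl hπ (ne_of_lt hlt)).mp (hm ▸ h2), hlt⟩
    · rintro (rfl | ⟨p, hp, rfl⟩)
      · exact ⟨by rw [wtP_zero]; omega, by simp⟩
      · rw [OPlt, mem_filter] at hp
        have hne : p.1 ≠ p.2 := ne_of_lt hp.2
        refine ⟨(pair_wt le π hrefl hπ hne).mpr hp.1, ?_⟩
        exact sum_pair_fun p.1 p.2
  rw [himg]
  have h0 : (0 : Fin N → ZMod 2) ∉
      (OPlt le π).image (fun p => (Pi.single p.1 1 + Pi.single p.2 1 : Fin N → ZMod 2)) := by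
    rw [Finset.mem_image]
    rintro ⟨p, hp, h⟩
    rw [OPlt, mem_filter] at hp
    exact pair_ne_zero (ne_of_lt hp.2) h
  have hinj : Set.InjOn (fun p : Fin N × Fin N => (Pi.single p.1 1 + Pi.single p.2 1 : Fin N → ZMod 2))
      (OPlt le π) := by
    intro p hp q hq h
    simp only [Finset.mem_coe, OPlt, mem_filter] at hp hq
    obtain ⟨hp1, hp2⟩ := hp
    obtain ⟨hq1, hq2⟩ := hq
    have hpne : p.1 ≠ p.2 := ne_of_lt hp2
    have hqne : q.1 ≠ q.2 := ne_of_lt hq2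
    have key : ∀ l, (l = p.1 ∨ l = p.2) ↔ (l = q.1 ∨ l = q.2) := by
      intro l
      have h' : (Pi.single p.1 1 + Pi.single p.2 1 : Fin N → ZMod 2) l
          = (Pi.single q.1 1 + Pi.single q.2 1 : Fin N → ZMod 2) l := congrFun h l
      rw [← pair_apply hpne l, ← pair_apply hqne l, h']
    have hP1 := (key p.1).mp (Or.inl rfl)
    have hP2 := (key p.2).mp (Or.inr rfl)
    have hQ1 := (key q.1).mpr (Or.inl rfl)
    have hQ2 := (key q.2).mpr (Or.inr rfl)
    simp only [Fin.ext_iff] at hP1 hP2 hQ1 hQ2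
    rw [Fin.lt_def] at hp2 hq2
    have : p.1.val = q.1.val ∧ p.2.val = q.2.val := by omega
    exact Prod.ext (Fin.ext this.1) (Fin.ext this.2)
  rw [Finset.card_insert_of_notMem h0, Finset.card_image_of_injOn hinj]
  omega

lemma omega_eq (hrefl : ∀ i, le i i) (ω : ℕ) :
    Omega le π 1 ω 1 = (MinA le π ω).card := by
  unfold Omega
  rw [← Finset.card_image_of_injective (MinA le π ω) Finset.singleton_injective]
  congr 1
  · ext I
    simp only [mem_filter, mem_univ, true_and, Finset.mem_image, MinA]
    constructor
    · rintro ⟨hdc, hc1, hsum, hmax⟩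
      obtain ⟨m, rfl⟩ := Finset.card_eq_one.mp hc1
      refine ⟨m, ⟨?_, ?_⟩, rfl⟩
      · intro l hl
        have := hdc m (Finset.mem_singleton_self m) l hl
        simpa using this
      · simpa using hsum
    · rintro ⟨m, ⟨hmin, hω⟩, rfl⟩
      refine ⟨?_, Finset.card_singleton m, by simpa using hω, ?_⟩
      · intro a ha b hb
        rw [Finset.mem_singleton] at ha ⊢
        subst ha
        exact hmin b hb
      · rw [Finset.card_eq_one]
        refine ⟨m, ?_⟩
        ext a
        simp only [Finset.mem_filter, Finset.mem_singleton]
        constructor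
        · rintro ⟨h, -⟩; exact h
        · rintro rfl
          exact ⟨rfl, fun b hb _ => hb.symm⟩

end Aux

lemma negF {M : ℕ} (v : Fin M → ZMod 2) : -v = v :=
  funext fun i => CharTwo.neg_eq (v i)

lemma subF {M : ℕ} (a b : Fin M → ZMod 2) : a - b = a + b := by
  rw [sub_eq_add_neg, negF]

theorem stmt_14 {k : ℕ} (hk : 2 ≤ k)
    (le : Fin (2 ^ k) → Fin (2 ^ k) → Prop)
    (hrefl : ∀ i, le i i)
    (hantisymm : ∀ i j, le i j → le j i → i = j)
    (htrans : ∀ i j l, le i j → le j l → le i l)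
    (π : Fin (2 ^ k) → ℕ) (hπ : ∀ i, 0 < π i)
    (hperf : IsCovering (dP le π) (extHamming k) 2 ∧
      IsPacking (dP le π) (extHamming k) 2) :
    2 * (Omega le π 1 2 1 : ℤ) =
      2 + (Omega le π 1 1 1 : ℤ) * ((Omega le π 1 1 1 : ℤ) - 3) := by
  obtain ⟨hcov, hpack⟩ := hperf
  have hrep : ∀ x : Fin (2 ^ k) → ZMod 2,
      ∃! u, wtP le π u ≤ 2 ∧ x - u ∈ extHamming k := by
    intro x
    obtain ⟨c, hc, hd⟩ := hcov x
    refine ⟨x - c, ⟨?_, by rwa [sub_sub_cancel]⟩, ?_⟩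
    · have h1 : x - c = c - x := by rw [subF, subF]; ring
      rw [h1]
      exact hd
    · rintro u ⟨hu2, huC⟩
      by_contra hne
      have hxu : x - u ≠ c := by
        intro h
        exact hne (by rw [← h, sub_sub_cancel])
      apply hpack (x - u) huC c hc hxu x
      constructor
      · show wtP le π ((x - u) - x) ≤ 2
        have h2 : (x - u) - x = u := by
          rw [sub_right_comm, sub_self, zero_sub, negF]
        rwa [h2]
      · exact hd
  let rep : (Fin (2 ^ k) → ZMod 2) → (Fin (2 ^ k) → ZMod 2) :=
    fun x => (hrep x).exists.choose
  have hrepP : ∀ x, wtP le π (rep x) ≤ 2 ∧ x - rep x ∈ extHamming k :=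
    fun x => (hrep x).exists.choose_spec
  have hrepPar : ∀ x, (∑ i, rep x i) = ∑ i, x i := by
    intro x
    have h0 := ((hrepP x).2).1
    have h1 : (∑ i, (x - rep x) i) = (∑ i, x i) - (∑ i, rep x i) := by
      simp only [Pi.sub_apply]
      rw [Finset.sum_sub_distrib]
    rw [h1] at h0
    exact (sub_eq_zero.mp h0).symm
  have hn : 0 < 2 ^ k := pow_pos (by norm_num) k
  let v0 : Fin (2 ^ k) → ZMod 2 := Pi.single ⟨0, hn⟩ 1
  have hv0 : (∑ i, v0 i) = 1 := sum_single _
  have hinv : ∀ u : Fin (2 ^ k) → ZMod 2, wtP le π u ≤ 2 →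
      rep (rep (u + v0) + v0) = u := by
    intro u hu
    have hC := (hrepP (u + v0)).2
    have hx : (rep (u + v0) + v0) - u = (u + v0) - rep (u + v0) := by
      rw [subF, subF]; ring
    exact (hrep (rep (u + v0) + v0)).unique (hrepP _) ⟨hu, hx ▸ hC⟩
  have hcards :
      (Finset.univ.filter (fun x : Fin (2 ^ k) → ZMod 2 =>
          wtP le π x ≤ 2 ∧ (∑ i, x i) = 0)).card
        = (Finset.univ.filter (fun x : Fin (2 ^ k) → ZMod 2 =>
          wtP le π x ≤ 2 ∧ (∑ i, x i) = 1)).card := by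
    apply Finset.card_bij' (i := fun u _ => rep (u + v0)) (j := fun u _ => rep (u + v0))
    · intro u hu
      rw [Finset.mem_filter] at hu
      rw [Finset.mem_filter]
      refine ⟨Finset.mem_univ _, (hrepP _).1, ?_⟩
      rw [hrepPar]
      simp only [Pi.add_apply]
      rw [Finset.sum_add_distrib, hu.2.2, hv0, zero_add]
    · intro u hu
      rw [Finset.mem_filter] at hu
      rw [Finset.mem_filter]
      refine ⟨Finset.mem_univ _, (hrepP _).1, ?_⟩
      rw [hrepPar]
      simp only [Pi.add_apply]
      rw [Finset.sum_add_distrib, hu.2.2, hv0]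
      decide
    · intro u hu
      rw [Finset.mem_filter] at hu
      exact hinv u hu.2.1
    · intro u hu
      rw [Finset.mem_filter] at hu
      exact hinv u hu.2.1
  have e2 := bodd_card le π hrefl hπ
  have e3 := beven_card le π hrefl hπ
  have e4 := OPF_card_eq le π
  have e5 := OPF_card_decomp le π hrefl hantisymm htrans
  have e6 : (MinA le π 1).offDiag.card
      = (MinA le π 1).card * (MinA le π 1).card - (MinA le π 1).card :=
    Finset.offDiag_card _
  rw [omega_eq le π hrefl 1, omega_eq le π hrefl 2]
  set a := (MinA le π 1).card with ha
  set b := (MinA le π 2).card with hb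
  set c := (CsetF le π).card with hc
  set q := (OPlt le π).card with hq
  have haa : a ≤ a * a := by nlinarith
  rw [hcards, e2] at e3
  -- e3 : a + b + c = 1 + q
  have h1 : (a : ℤ) + b + c = 1 + q := by exact_mod_cast e3
  have h2 : (2 * q : ℤ) = a * a - a + 2 * c := by
    rw [e5, e6] at e4
    have : (2 * q : ℤ) = ((a * a - a : ℕ) : ℤ) + 2 * c := by exact_mod_cast e4.symm
    rw [this, Nat.cast_sub haa]
    push_cast
    ring
  linear_combination 2 * h1 + h2
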